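/- Let F be a stack on K. A vector field V on F is acyclic (contains no non-trivial closed gradient path) if and only if V is the gradient vector field of some Morse sequence on F. -/
import Mathlib


open Finset

abbrev Simplex : Type := Finset ℕ
abbrev Cplx : Type := Finset (Finset ℕ)

/-- A simplicial complex: a finite set of nonempty finite sets closed under
taking nonempty subsets. -/
def IsSimpComplex (K : Cplx) : Prop :=
  (∀ τ ∈ K, τ.Nonempty) ∧ ∀ τ ∈ K, ∀ σ : Simplex, σ ⊆ τ → σ.Nonempty → σ ∈ K

/-- A cosimplicial complex: for all σ, τ ∈ S, every ν with σ ⊆ ν ⊆ τ is in S. -/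
def IsCosimplicial (S : Cplx) : Prop :=
  ∀ σ ∈ S, ∀ τ ∈ S, ∀ ν : Simplex, σ ⊆ ν → ν ⊆ τ → ν ∈ S

/-- S is open for K. -/
def IsOpenFor (K S : Cplx) : Prop :=
  S ⊆ K ∧ ∀ σ ∈ S, ∀ τ ∈ K, σ ⊆ τ → τ ∈ S

/-- S is closed for K. -/
def IsClosedFor (K S : Cplx) : Prop :=
  S ⊆ K ∧ IsSimpComplex S

/-- Closure of a finite set of simplexes: all nonempty subsets of members. -/
def cl (S : Cplx) : Cplx :=
  S.biUnion fun τ => τ.powerset.filter fun σ => σ.Nonempty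

/-- (σ, τ) is a free pair for K: τ is the only face of K properly containing σ. -/
def IsFreePair (K : Cplx) (σ τ : Simplex) : Prop :=
  σ ∈ K ∧ τ ∈ K ∧ σ ⊂ τ ∧ ∀ ρ ∈ K, σ ⊂ ρ → ρ = τ

/-- K' is an elementary expansion of K. -/
def ElemExpansion (K' K : Cplx) : Prop :=
  ∃ σ τ : Simplex, σ ∉ K ∧ τ ∉ K ∧ K' = K ∪ {σ, τ} ∧ IsFreePair K' σ τ

/-- K' is an elementary filling of K: K' = K ∪ {ν} with ν a facet of K'. -/
def ElemFilling (K' K : Cplx) : Prop :=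
  ∃ ν : Simplex, ν ∉ K ∧ K' = insert ν K ∧ ∀ ρ ∈ K', ν ⊆ ρ → ρ = ν

/-- A collapses onto B: a sequence of elementary collapses from A to B. -/
def Collapses (A B : Cplx) : Prop :=
  Relation.ReflTransGen (fun X Y : Cplx => ElemExpansion X Y) A B

/-- A Morse sequence from L to K, as W 0, …, W k, consisting of simplicial
complexes, each step an elementary expansion or an elementary filling. -/
def MorseSeq (L K : Cplx) (k : ℕ) (W : ℕ → Cplx) : Prop :=
  W 0 = L ∧ W k = K ∧ (∀ i ≤ k, IsSimpComplex (W i)) ∧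
  ∀ i < k, ElemExpansion (W (i+1)) (W i) ∨ ElemFilling (W (i+1)) (W i)

/-- F is a stack on S: monotone with respect to inclusion. -/
def IsStackOn (S : Cplx) (F : Simplex → ℤ) : Prop :=
  ∀ σ ∈ S, ∀ τ ∈ S, σ ⊆ τ → F σ ≤ F τ

/-- (σ, τ) is a regular pair of the Morse sequence W (of length k). -/
def RegularPair (k : ℕ) (W : ℕ → Cplx) (σ τ : Simplex) : Prop :=
  ∃ i < k, σ ∉ W i ∧ τ ∉ W i ∧ W (i+1) = W i ∪ {σ, τ} ∧ IsFreePair (W (i+1)) σ τ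

/-- An F-sequence: a Morse sequence whose regular pairs satisfy F σ = F τ. -/
def FSeq (F : Simplex → ℤ) (L K : Cplx) (k : ℕ) (W : ℕ → Cplx) : Prop :=
  MorseSeq L K k W ∧ ∀ σ τ : Simplex, RegularPair k W σ τ → F σ = F τ

/-- A flooding sequence: an F-sequence from ∅ to K such that F σ ≤ F τ whenever
σ ∈ K_i and τ ∈ K_j appears strictly later (τ ∉ K_i), with i < j. -/
def Flooding (F : Simplex → ℤ) (K : Cplx) (k : ℕ) (W : ℕ → Cplx) : Prop :=
  FSeq F ∅ K k W ∧
  ∀ i j : ℕ, i < j → j ≤ k → ∀ σ ∈ W i, ∀ τ ∈ W j, τ ∉ W i → F σ ≤ F τ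

/-- Coboundary δ(ν, S) of ν in S. -/
def cob (S : Cplx) (ν : Simplex) : Cplx :=
  S.filter fun μ => ν ⊆ μ ∧ μ.card = ν.card + 1

/-- Boundary ∂(ν, S) of ν in S. -/
def bdry (S : Cplx) (ν : Simplex) : Cplx :=
  S.filter fun η => η ⊆ ν ∧ η.card + 1 = ν.card

/-- A vector field on the stack F : pairs (σ, τ) with σ a codimension-1 face of τ
and F σ = F τ, each simplex of K belonging to at most one pair. -/
def IsVectorFieldOn (K : Cplx) (F : Simplex → ℤ) (V : Finset (Simplex × Simplex)) : Prop :=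
  (∀ p ∈ V, p.1 ∈ K ∧ p.2 ∈ K ∧ p.1 ⊆ p.2 ∧ p.2.card = p.1.card + 1 ∧ F p.1 = F p.2) ∧
  (∀ p ∈ V, ∀ q ∈ V, p ≠ q → p.1 ≠ q.1 ∧ p.1 ≠ q.2 ∧ p.2 ≠ q.1 ∧ p.2 ≠ q.2)

/-- V contains a non-trivial closed p-gradient path. -/
def HasNontrivialClosedPath (V : Finset (Simplex × Simplex)) : Prop :=
  ∃ (n : ℕ) (σ τ : ℕ → Simplex), 1 ≤ n ∧ σ 0 = σ n ∧
    ∀ i < n, (σ i, τ i) ∈ V ∧ σ (i+1) ⊆ τ i ∧ σ (i+1) ≠ σ i ∧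
      (σ (i+1)).card = (σ i).card


section Aux

open Relation

lemma isSimpComplex_empty : IsSimpComplex (∅ : Cplx) := by
  constructor <;> intro τ hτ <;> simp at hτ

lemma morse_step_subset {L K : Cplx} {k : ℕ} {W : ℕ → Cplx} (h : MorseSeq L K k W)
    {i : ℕ} (hi : i < k) : W i ⊆ W (i+1) := by
  rcases h.2.2.2 i hi with ⟨σ, τ, _, _, hEq, _⟩ | ⟨ν, _, hEq, _⟩
  · rw [hEq]; exact Finset.subset_union_left
  · rw [hEq]; exact Finset.subset_insert _ _

lemma morse_mono {L K : Cplx} {k : ℕ} {W : ℕ → Cplx} (h : MorseSeq L K k W)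
    {i j : ℕ} (hij : i ≤ j) (hjk : j ≤ k) : W i ⊆ W j := by
  induction j with
  | zero =>
    have : i = 0 := Nat.le_zero.mp hij
    subst this; exact subset_rfl
  | succ j ihj =>
    by_cases hij' : i = j + 1
    · subst hij'; exact subset_rfl
    · have h1 : i ≤ j := by omega
      exact (ihj h1 (by omega)).trans (morse_step_subset h (by omega))

lemma vf_noPath_of_seq {K : Cplx} {F : Simplex → ℤ} {V : Finset (Simplex × Simplex)}
    (hK : IsSimpComplex K) (hV : IsVectorFieldOn K F V)
    {k : ℕ} {W : ℕ → Cplx} (hW : MorseSeq ∅ K k W)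
    (hiff : ∀ σ τ : Simplex, ((σ, τ) ∈ V ↔ RegularPair k W σ τ)) :
    ¬ HasNontrivialClosedPath V := by
  rintro ⟨n, σ, τ, hn, hcl, hstep⟩
  have hex : ∀ i, ∃ j, i < n → (j < k ∧ σ i ∉ W j ∧ τ i ∉ W j ∧
      W (j+1) = W j ∪ {σ i, τ i} ∧ IsFreePair (W (j+1)) (σ i) (τ i)) := by
    intro i
    by_cases hi : i < n
    · obtain ⟨j, hj, rest⟩ := (hiff (σ i) (τ i)).mp (hstep i hi).1
      exact ⟨j, fun _ => ⟨hj, rest⟩⟩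
    · exact ⟨0, fun h => absurd h hi⟩
  choose t ht using hex
  have hσK : ∀ i, i ≤ n → σ i ∈ K := by
    intro i hi
    by_cases hi' : i < n
    · exact (hV.1 _ (hstep i hi').1).1
    · have : i = n := by omega
      subst this
      rw [← hcl]
      exact (hV.1 _ (hstep 0 hn).1).1
  have hmemW : ∀ i, i < n → σ (i+1) ∈ W (t i) := by
    intro i hi
    obtain ⟨hjk, hs, hτ', hEq, hfree⟩ := ht i hi
    have hτmem : τ i ∈ W (t i + 1) := by
      rw [hEq]
      exact Finset.mem_union_right _ (by simp)
    have hsc : IsSimpComplex (W (t i + 1)) := hW.2.2.1 _ hjk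
    have hsub : σ (i+1) ⊆ τ i := (hstep i hi).2.1
    have hne1 : σ (i+1) ≠ σ i := (hstep i hi).2.2.1
    have hcard : (σ (i+1)).card = (σ i).card := (hstep i hi).2.2.2
    have hcardτ : (τ i).card = (σ i).card + 1 := (hV.1 _ (hstep i hi).1).2.2.2.1
    have hnonempty : (σ (i+1)).Nonempty := hK.1 _ (hσK (i+1) hi)
    have hmem : σ (i+1) ∈ W (t i + 1) := hsc.2 _ hτmem _ hsub hnonempty
    rw [hEq] at hmem
    rcases Finset.mem_union.mp hmem with h | h
    · exact h
    · rcases Finset.mem_insert.mp h with h' | h'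
      · exact absurd h' hne1
      · have h'' : σ (i+1) = τ i := by simpa using h'
        rw [h''] at hcard
        omega
  have hdec : ∀ i, i + 1 < n → t (i+1) < t i := by
    intro i hi
    by_contra hcon
    push_neg at hcon
    have h1 : σ (i+1) ∈ W (t (i+1)) :=
      morse_mono hW hcon (Nat.le_of_lt (ht (i+1) hi).1) (hmemW i (by omega))
    exact (ht (i+1) hi).2.1 h1
  have hchain : ∀ m, m < n → t m ≤ t 0 := by
    intro m
    induction m with
    | zero => intro _; exact le_rfl
    | succ m ihm =>
      intro hm
      have := hdec m hm
      have := ihm (by omega)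
      omega
  have hn1 : n - 1 + 1 = n := Nat.succ_pred_eq_of_pos hn
  have hlast : σ 0 ∈ W (t (n-1)) := by
    have := hmemW (n-1) (by omega)
    rw [hn1] at this
    rw [hcl]
    exact this
  have hnot0 : σ 0 ∉ W (t 0) := (ht 0 hn).2.1
  have hle : t (n-1) ≤ t 0 := hchain (n-1) (by omega)
  exact hnot0 (morse_mono hW hle (Nat.le_of_lt (ht 0 hn).1) hlast)

/-- The unit of a simplex: itself together with any τ it is paired with. -/
def unitOf (V : Finset (Simplex × Simplex)) (a : Simplex) : Finset Simplex :=
  insert a ((V.filter fun p => p.1 = a).image Prod.snd)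

/-- The precedence relation between units (indexed by arbitrary simplexes). -/
def VRel (V : Finset (Simplex × Simplex)) (a b : Simplex) : Prop :=
  a ≠ b ∧ ∃ x ∈ unitOf V a, ∃ y ∈ unitOf V b, x ⊂ y

lemma mem_unitOf {V : Finset (Simplex × Simplex)} {a x : Simplex} :
    x ∈ unitOf V a ↔ x = a ∨ (a, x) ∈ V := by
  unfold unitOf
  simp only [Finset.mem_insert, Finset.mem_image, Finset.mem_filter]
  constructor
  · rintro (h | ⟨⟨p1, p2⟩, ⟨hp, hp1⟩, hp2⟩)
    · exact Or.inl h
    · right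
      simp only at hp1 hp2
      subst hp1; subst hp2
      exact hp
  · rintro (h | h)
    · exact Or.inl h
    · exact Or.inr ⟨(a, x), ⟨h, rfl⟩, rfl⟩

lemma self_mem_unitOf {V : Finset (Simplex × Simplex)} {a : Simplex} : a ∈ unitOf V a :=
  mem_unitOf.mpr (Or.inl rfl)

lemma transGen_exists_fun {α : Type} {r : α → α → Prop} {a b : α}
    (h : Relation.TransGen r a b) :
    ∃ (n : ℕ) (f : ℕ → α), f 0 = a ∧ f (n+1) = b ∧ ∀ i ≤ n, r (f i) (f (i+1)) := by
  induction h with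
  | @single c hr =>
    refine ⟨0, fun i => if i = 0 then a else c, by simp, by simp, ?_⟩
    intro i hi
    have : i = 0 := Nat.le_zero.mp hi
    subst this
    simpa using hr
  | @tail b' c hab hbc ih =>
    obtain ⟨n, f, hf0, hfn, hstep⟩ := ih
    refine ⟨n+1, fun i => if i ≤ n+1 then f i else c, ?_, ?_, ?_⟩
    · simp [hf0]
    · simp
    · intro i hi
      by_cases h1 : i ≤ n
      · have e1 : i ≤ n + 1 := by omega
        have e2 : i + 1 ≤ n + 1 := by omega
        simp only [if_pos e1, if_pos e2]
        exact hstep i h1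
      · have : i = n + 1 := by omega
        subst this
        have e1 : n + 1 ≤ n + 1 := le_rfl
        have e2 : ¬ (n + 2 ≤ n + 1) := by omega
        simp only [if_pos e1, if_neg e2]
        rw [hfn]
        exact hbc

lemma rel_irrefl {K : Cplx} {F : Simplex → ℤ} {V : Finset (Simplex × Simplex)}
    (hV : IsVectorFieldOn K F V) (hnc : ¬ HasNontrivialClosedPath V) (a : Simplex) :
    ¬ Relation.TransGen (VRel V) a a := by
  intro h
  obtain ⟨n, f, hf0, hfn, hstep⟩ := transGen_exists_fun h
  have hex : ∀ i, ∃ x y, i ≤ n →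
      (x ∈ unitOf V (f i) ∧ y ∈ unitOf V (f (i+1)) ∧ x ⊂ y ∧ f i ≠ f (i+1)) := by
    intro i
    by_cases hi : i ≤ n
    · obtain ⟨hne, x, hx, y, hy, hxy⟩ := hstep i hi
      exact ⟨x, y, fun _ => ⟨hx, hy, hxy, hne⟩⟩
    · exact ⟨∅, ∅, fun h' => absurd h' hi⟩
  choose x y hxy using hex
  have hcard_unit : ∀ (a z : Simplex), z ∈ unitOf V a →
      z = a ∨ ((a, z) ∈ V ∧ z.card = a.card + 1) := by
    intro a z hz
    rcases mem_unitOf.mp hz with h | h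
    · exact Or.inl h
    · exact Or.inr ⟨h, (hV.1 _ h).2.2.2.1⟩
  have hmono : ∀ i, i ≤ n → (f i).card ≤ (f (i+1)).card := by
    intro i hi
    obtain ⟨hx, hy, hxy', hne⟩ := hxy i hi
    have h3 : (x i).card < (y i).card := Finset.card_lt_card hxy'
    rcases hcard_unit _ _ hx with h1 | h1 <;> rcases hcard_unit _ _ hy with h2 | h2 <;>
      first
        | (rw [h1] at h3; rw [h2] at h3; omega)
        | (rw [h1] at h3; rw [h2.2] at h3 <;> omega)
        | (rw [h1.2] at h3; rw [h2] at h3 <;> omega)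
        | (rw [h1.2, h2.2] at h3; omega)
  have hmono' : ∀ i j, i ≤ j → j ≤ n + 1 → (f i).card ≤ (f j).card := by
    intro i j hij hj
    induction j with
    | zero =>
      have : i = 0 := Nat.le_zero.mp hij
      subst this; exact le_rfl
    | succ j ihj =>
      by_cases hij' : i = j + 1
      · subst hij'; exact le_rfl
      · exact (ihj (by omega) (by omega)).trans (hmono j (by omega))
  have hceq : ∀ i, i ≤ n + 1 → (f i).card = (f 0).card := by
    intro i hi
    have h1 : (f 0).card ≤ (f i).card := hmono' 0 i (Nat.zero_le _) hi
    have h2 : (f i).card ≤ (f (n+1)).card := hmono' i (n+1) hi le_rfl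
    have h3 : (f (n+1)).card = (f 0).card := by rw [hfn, hf0]
    omega
  have hkey : ∀ i, i ≤ n → x i = f i ∧ (f (i+1), y i) ∈ V := by
    intro i hi
    obtain ⟨hx, hy, hxy', hne⟩ := hxy i hi
    have h3 : (x i).card < (y i).card := Finset.card_lt_card hxy'
    have hc1 : (f i).card = (f 0).card := hceq i (by omega)
    have hc2 : (f (i+1)).card = (f 0).card := hceq (i+1) (by omega)
    rcases hcard_unit _ _ hx with h1 | h1 <;> rcases hcard_unit _ _ hy with h2 | h2
    · exfalso; rw [h1, h2] at h3; omega
    · exact ⟨h1, h2.1⟩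
    · exfalso; rw [h1.2] at h3; rw [h2] at h3; omega
    · exfalso; rw [h1.2, h2.2] at h3; omega
  apply hnc
  refine ⟨n+1, fun j => f (n+1-j), fun j => y (n-j), Nat.succ_le_succ (Nat.zero_le _), ?_, ?_⟩
  · show f (n+1-0) = f (n+1-(n+1))
    simp only [Nat.sub_zero, Nat.sub_self]
    rw [hfn, hf0]
  · intro j hj
    have hj' : j ≤ n := Nat.lt_succ_iff.mp hj
    have e1 : n + 1 - j = (n - j) + 1 := by omega
    have e2 : n + 1 - (j + 1) = n - j := by omega
    obtain ⟨hxe, hyV⟩ := hkey (n-j) (by omega)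
    obtain ⟨hx, hy, hxy', hne⟩ := hxy (n-j) (by omega)
    refine ⟨?_, ?_, ?_, ?_⟩
    · show (f (n+1-j), y (n-j)) ∈ V
      rw [e1]; exact hyV
    · show f (n+1-(j+1)) ⊆ y (n-j)
      rw [e2, ← hxe]
      exact le_of_lt hxy'
    · show f (n+1-(j+1)) ≠ f (n+1-j)
      rw [e2, e1]; exact hne
    · show (f (n+1-(j+1))).card = (f (n+1-j)).card
      rw [e2, e1, hceq (n-j) (by omega), hceq (n-j+1) (by omega)]


lemma exists_max {α : Type} [DecidableEq α] {r : α → α → Prop}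
    (hirr : ∀ a, ¬ Relation.TransGen r a a) (t : Finset α) :
    ∀ s : Finset α, s.Nonempty → (∀ b ∈ s, ∀ c ∈ t, r b c → c ∈ s) →
      ∃ b ∈ s, ∀ c ∈ t, ¬ r b c := by
  classical
  intro s
  induction s using Finset.strongInduction with
  | _ s ih =>
    intro hne hclo
    obtain ⟨a, ha⟩ := hne
    by_cases hmax : ∀ c ∈ t, ¬ r a c
    · exact ⟨a, ha, hmax⟩
    · push_neg at hmax
      obtain ⟨c0, hc0t, hc0⟩ := hmax
      set s' := s.filter (fun z => Relation.TransGen r a z) with hs'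
      have hsub : s' ⊆ s := Finset.filter_subset _ _
      have hass' : a ∉ s' := fun h => hirr a (Finset.mem_filter.mp h).2
      have hss : s' ⊂ s := (Finset.ssubset_iff_of_subset hsub).mpr ⟨a, ha, hass'⟩
      have hc0s : c0 ∈ s := hclo a ha c0 hc0t hc0
      have hc0s' : c0 ∈ s' := Finset.mem_filter.mpr ⟨hc0s, Relation.TransGen.single hc0⟩
      have hclo' : ∀ b ∈ s', ∀ c ∈ t, r b c → c ∈ s' := by
        intro b hb c hct hbc
        exact Finset.mem_filter.mpr
          ⟨hclo b (hsub hb) c hct hbc, ((Finset.mem_filter.mp hb).2).tail hbc⟩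
      obtain ⟨b, hb, hbmax⟩ := ih s' hss ⟨c0, hc0s'⟩ hclo'
      exact ⟨b, hsub hb, hbmax⟩

lemma morse_succ {K' K : Cplx} {k : ℕ} {W : ℕ → Cplx} (h : MorseSeq ∅ K' k W)
    (hKc : IsSimpComplex K) (hstep : ElemExpansion K K' ∨ ElemFilling K K') :
    MorseSeq ∅ K (k+1) (fun i => if i ≤ k then W i else K) := by
  obtain ⟨h0, hk, hsc, hst⟩ := h
  refine ⟨by simp [h0], by simp, ?_, ?_⟩
  · intro i hi
    by_cases hik : i ≤ k
    · simpa [hik] using hsc i hik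
    · simpa [hik] using hKc
  · intro i hi
    by_cases hik : i < k
    · have e1 : i ≤ k := by omega
      have e2 : i + 1 ≤ k := by omega
      simpa only [if_pos e1, if_pos e2] using hst i hik
    · have hik' : i = k := by omega
      subst hik'
      have e1 : i ≤ i := le_rfl
      have e2 : ¬ (i + 1 ≤ i) := by omega
      simp only [if_pos e1, if_neg e2]
      rw [hk]
      exact hstep

lemma regular_succ {k : ℕ} {W : ℕ → Cplx} {K : Cplx} {σ τ : Simplex} :
    RegularPair (k+1) (fun i => if i ≤ k then W i else K) σ τ ↔
      RegularPair k W σ τ ∨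
        (σ ∉ W k ∧ τ ∉ W k ∧ K = W k ∪ {σ, τ} ∧ IsFreePair K σ τ) := by
  have hle : ∀ i, i ≤ k → (fun i => if i ≤ k then W i else K) i = W i := by
    intro i hi; simp [hi]
  have hgt : (fun i => if i ≤ k then W i else K) (k+1) = K := by simp
  constructor
  · rintro ⟨i, hi, h1, h2, hEq, hfree⟩
    by_cases hik : i < k
    · left
      rw [hle i (by omega)] at h1 h2
      rw [hle i (by omega), hle (i+1) (by omega)] at hEq
      rw [hle (i+1) (by omega)] at hfree
      exact ⟨i, hik, h1, h2, hEq, hfree⟩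
    · right
      have hik' : i = k := by omega
      subst hik'
      rw [hle i le_rfl] at h1 h2
      rw [hle i le_rfl, hgt] at hEq
      rw [hgt] at hfree
      exact ⟨h1, h2, hEq, hfree⟩
  · rintro (⟨i, hi, h1, h2, hEq, hfree⟩ | ⟨h1, h2, hEq, hfree⟩)
    · refine ⟨i, by omega, ?_, ?_, ?_, ?_⟩
      · rw [hle i (by omega)]; exact h1
      · rw [hle i (by omega)]; exact h2
      · rw [hle i (by omega), hle (i+1) (by omega)]; exact hEq
      · rw [hle (i+1) (by omega)]; exact hfree
    · refine ⟨k, by omega, ?_, ?_, ?_, ?_⟩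
      · rw [hle k le_rfl]; exact h1
      · rw [hle k le_rfl]; exact h2
      · rw [hle k le_rfl, hgt]; exact hEq
      · rw [hgt]; exact hfree

lemma build_empty (F : Simplex → ℤ) (V : Finset (Simplex × Simplex))
    (hV : IsVectorFieldOn ∅ F V) :
    ∃ (k : ℕ) (W : ℕ → Cplx), FSeq F ∅ ∅ k W ∧
      ∀ σ τ : Simplex, ((σ, τ) ∈ V ↔ RegularPair k W σ τ) := by
  have hVe : ∀ p : Simplex × Simplex, p ∉ V := fun p hp => by simpa using (hV.1 p hp).1
  refine ⟨0, fun _ => ∅,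
    ⟨⟨rfl, rfl, fun i _ => isSimpComplex_empty, fun i hi => absurd hi (by omega)⟩, ?_⟩, ?_⟩
  · rintro σ τ ⟨i, hi, -⟩; omega
  · intro σ τ
    constructor
    · intro h; exact absurd h (hVe _)
    · rintro ⟨i, hi, -⟩; omega

lemma build (F : Simplex → ℤ) :
    ∀ (n : ℕ) (K : Cplx) (V : Finset (Simplex × Simplex)), K.card ≤ n →
      IsSimpComplex K → IsVectorFieldOn K F V → ¬ HasNontrivialClosedPath V →
      ∃ (k : ℕ) (W : ℕ → Cplx), FSeq F ∅ K k W ∧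
        ∀ σ τ : Simplex, ((σ, τ) ∈ V ↔ RegularPair k W σ τ) := by
  intro n
  induction n with
  | zero =>
    intro K V hcard hK hV hnc
    have hKe : K = ∅ := Finset.card_eq_zero.mp (Nat.le_zero.mp hcard)
    subst hKe
    exact build_empty F V hV
  | succ n ih =>
    intro K V hcard hK hV hnc
    classical
    by_cases hKe : K = ∅
    · subst hKe; exact build_empty F V hV
    have hKne : K.Nonempty := Finset.nonempty_iff_ne_empty.mpr hKe
    set Reps := K.filter (fun a => ∀ p ∈ V, p.2 ≠ a) with hRepsDef
    have hfstReps : ∀ p ∈ V, p.1 ∈ Reps := by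
      intro p hp
      refine Finset.mem_filter.mpr ⟨(hV.1 p hp).1, ?_⟩
      intro q hq hq2
      by_cases hpq : p = q
      · subst hpq
        have hcc := (hV.1 p hp).2.2.2.1
        rw [hq2] at hcc
        omega
      · exact (hV.2 p hp q hq hpq).2.1 hq2.symm
    have hRepsNe : Reps.Nonempty := by
      obtain ⟨a, ha⟩ := hKne
      by_cases h : ∃ p ∈ V, p.2 = a
      · obtain ⟨p, hp, -⟩ := h
        exact ⟨p.1, hfstReps p hp⟩
      · push_neg at h
        exact ⟨a, Finset.mem_filter.mpr ⟨ha, h⟩⟩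
    obtain ⟨b, hbReps, hbmax⟩ :=
      exists_max (rel_irrefl hV hnc) Reps Reps hRepsNe (fun _ _ c hc _ => hc)
    have hbK : b ∈ K := (Finset.mem_filter.mp hbReps).1
    have hbno2 : ∀ p ∈ V, p.2 ≠ b := (Finset.mem_filter.mp hbReps).2
    have hclose : ∀ z ∈ K, ∀ x ∈ unitOf V b, x ⊂ z → z ∈ unitOf V b := by
      intro z hz x hx hxz
      by_cases hzt : ∃ p ∈ V, p.2 = z
      · obtain ⟨p, hp, hpz⟩ := hzt
        have hpze : (p.1, z) = p := by rw [← hpz]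
        have hcReps : p.1 ∈ Reps := hfstReps p hp
        by_cases hcb : p.1 = b
        · rw [← hcb]
          exact mem_unitOf.mpr (Or.inr (by rw [hpze]; exact hp))
        · exact absurd ⟨fun h => hcb h.symm, x, hx, z,
            mem_unitOf.mpr (Or.inr (by rw [hpze]; exact hp)), hxz⟩ (hbmax p.1 hcReps)
      · push_neg at hzt
        have hzReps : z ∈ Reps := Finset.mem_filter.mpr ⟨hz, hzt⟩
        by_cases hzb : z = b
        · subst hzb; exact self_mem_unitOf
        · exact absurd ⟨fun h => hzb h.symm, x, hx, z, self_mem_unitOf, hxz⟩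
            (hbmax z hzReps)
    by_cases hmb : ∃ t0, (b, t0) ∈ V
    · -- b is matched with t0 : expansion step
      obtain ⟨t0, hbt⟩ := hmb
      have hbt1 := hV.1 _ hbt
      have htK : t0 ∈ K := hbt1.2.1
      have hbsubt : b ⊆ t0 := hbt1.2.2.1
      have hcardt : t0.card = b.card + 1 := hbt1.2.2.2.1
      have hbnet : b ≠ t0 := by intro h; rw [h] at hcardt; omega
      have hbsst : b ⊂ t0 := Finset.ssubset_iff_subset_ne.mpr ⟨hbsubt, hbnet⟩
      have hunit : unitOf V b = {b, t0} := by
        ext z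
        rw [mem_unitOf]
        simp only [Finset.mem_insert, Finset.mem_singleton]
        constructor
        · rintro (h | h)
          · exact Or.inl h
          · right
            by_cases hz : (b, z) = (b, t0)
            · simpa using hz
            · exact absurd rfl ((hV.2 _ h _ hbt hz).1)
        · rintro (h | h)
          · exact Or.inl h
          · subst h; exact Or.inr hbt
      have hcofb : ∀ ρ ∈ K, b ⊂ ρ → ρ = t0 := by
        intro ρ hρ h
        have hm := hclose ρ hρ b self_mem_unitOf h
        rw [hunit] at hm
        rcases Finset.mem_insert.mp hm with h' | h'
        · exact absurd (Finset.card_lt_card h) (by rw [h']; omega)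
        · simpa using h'
      have hcoft : ∀ ρ ∈ K, ¬ t0 ⊂ ρ := by
        intro ρ hρ h
        have ht0mem : t0 ∈ unitOf V b := by rw [hunit]; simp
        have hm := hclose ρ hρ t0 ht0mem h
        have hc := Finset.card_lt_card h
        rw [hunit] at hm
        rcases Finset.mem_insert.mp hm with h' | h'
        · rw [h'] at hc; omega
        · rw [Finset.mem_singleton] at h'; rw [h'] at hc; omega
      set K' := (K.erase b).erase t0 with hK'def
      have hmemK' : ∀ z, z ∈ K' ↔ z ∈ K ∧ z ≠ b ∧ z ≠ t0 := by
        intro z; simp only [hK'def, Finset.mem_erase]; tauto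
      have hbK' : b ∉ K' := fun h => ((hmemK' b).mp h).2.1 rfl
      have htK' : t0 ∉ K' := fun h => ((hmemK' t0).mp h).2.2 rfl
      have hcard' : K'.card ≤ n := by
        have h1 : (K.erase b).card = K.card - 1 := Finset.card_erase_of_mem hbK
        have h2 : K'.card ≤ (K.erase b).card := by rw [hK'def]; exact Finset.card_erase_le
        have h3 : 1 ≤ K.card := Finset.card_pos.mpr hKne
        omega
      have hK'c : IsSimpComplex K' := by
        constructor
        · intro τ hτ; exact hK.1 _ ((hmemK' τ).mp hτ).1
        · intro μ hμ ρ hρμ hρne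
          obtain ⟨hμK, hμb, hμt⟩ := (hmemK' μ).mp hμ
          have hρK : ρ ∈ K := hK.2 _ hμK _ hρμ hρne
          refine (hmemK' ρ).mpr ⟨hρK, ?_, ?_⟩
          · rintro rfl
            have hss : ρ ⊂ μ := Finset.ssubset_iff_subset_ne.mpr ⟨hρμ, fun h => hμb h.symm⟩
            exact hμt (hcofb μ hμK hss)
          · rintro rfl
            have hss : ρ ⊂ μ := Finset.ssubset_iff_subset_ne.mpr ⟨hρμ, fun h => hμt h.symm⟩
            exact hcoft μ hμK hss
      set V' := V.erase (b, t0) with hV'def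
      have hV'mem : ∀ p, p ∈ V' ↔ p ∈ V ∧ p ≠ (b, t0) := by
        intro p; rw [hV'def, Finset.mem_erase]; tauto
      have hV'c : IsVectorFieldOn K' F V' := by
        constructor
        · intro p hp
          obtain ⟨hpV, hpne⟩ := (hV'mem p).mp hp
          have h4 := hV.2 p hpV (b, t0) hbt hpne
          have h1 := hV.1 p hpV
          exact ⟨(hmemK' _).mpr ⟨h1.1, h4.1, h4.2.1⟩,
            (hmemK' _).mpr ⟨h1.2.1, h4.2.2.1, h4.2.2.2⟩, h1.2.2⟩
        · intro p hp q hq hpq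
          exact hV.2 p ((hV'mem p).mp hp).1 q ((hV'mem q).mp hq).1 hpq
      have hnc' : ¬ HasNontrivialClosedPath V' := by
        rintro ⟨m, σ, τ, h1, h2, h3⟩
        exact hnc ⟨m, σ, τ, h1, h2, fun i hi =>
          ⟨((hV'mem _).mp (h3 i hi).1).1, (h3 i hi).2⟩⟩
      obtain ⟨k, W, ⟨hMS, hreg⟩, hiff⟩ := ih K' V' hcard' hK'c hV'c hnc'
      have hWk : W k = K' := hMS.2.1
      have hKeq : K = K' ∪ {b, t0} := by
        ext z
        simp only [Finset.mem_union, Finset.mem_insert, Finset.mem_singleton, hmemK' z]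
        constructor
        · intro hz
          by_cases h1 : z = b
          · tauto
          · by_cases h2 : z = t0 <;> tauto
        · rintro (⟨h, -, -⟩ | rfl | rfl)
          · exact h
          · exact hbK
          · exact htK
      have hfree : IsFreePair K b t0 := ⟨hbK, htK, hbsst, fun ρ hρ h => hcofb ρ hρ h⟩
      have hexp : ElemExpansion K K' := ⟨b, t0, hbK', htK', hKeq, hfree⟩
      have hident : ∀ σ τ : Simplex, σ ∉ W k → τ ∉ W k → K = W k ∪ {σ, τ} →
          IsFreePair K σ τ → σ = b ∧ τ = t0 := by
        intro σ τ h1 h2 hEq hfp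
        rw [hWk] at h1 h2 hEq
        have hσK : σ ∈ K := by rw [hEq]; simp
        have hτK : τ ∈ K := by rw [hEq]; simp
        have hσbt : σ = b ∨ σ = t0 := by
          by_contra h; push_neg at h; exact h1 ((hmemK' σ).mpr ⟨hσK, h.1, h.2⟩)
        have hτbt : τ = b ∨ τ = t0 := by
          by_contra h; push_neg at h; exact h2 ((hmemK' τ).mpr ⟨hτK, h.1, h.2⟩)
        have hclt := Finset.card_lt_card hfp.2.2.1
        rcases hσbt with rfl | rfl <;> rcases hτbt with h' | h'
        · rw [h'] at hclt; omega
        · exact ⟨rfl, h'⟩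
        · rw [h'] at hclt; omega
        · rw [h'] at hclt; omega
      refine ⟨k+1, fun i => if i ≤ k then W i else K,
        ⟨morse_succ hMS hK (Or.inl hexp), ?_⟩, ?_⟩
      · intro σ τ hrp
        rcases regular_succ.mp hrp with h | ⟨h1, h2, hEq, hfp⟩
        · exact hreg σ τ h
        · obtain ⟨rfl, rfl⟩ := hident σ τ h1 h2 hEq hfp
          exact hbt1.2.2.2.2
      · intro σ τ
        rw [regular_succ]
        constructor
        · intro h
          by_cases hp : (σ, τ) = (b, t0)
          · right
            obtain ⟨rfl, rfl⟩ : σ = b ∧ τ = t0 := by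
              constructor <;> [exact congrArg Prod.fst hp; exact congrArg Prod.snd hp]
            rw [hWk]
            exact ⟨hbK', htK', hKeq, hfree⟩
          · left; exact (hiff σ τ).mp ((hV'mem _).mpr ⟨h, hp⟩)
        · rintro (h | ⟨h1, h2, hEq, hfp⟩)
          · exact ((hV'mem _).mp ((hiff σ τ).mpr h)).1
          · obtain ⟨rfl, rfl⟩ := hident σ τ h1 h2 hEq hfp
            exact hbt
    · -- b is critical : filling step
      push_neg at hmb
      have hunit : unitOf V b = {b} := by
        ext z
        rw [mem_unitOf]
        simp only [Finset.mem_singleton]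
        constructor
        · rintro (h | h)
          · exact h
          · exact absurd h (hmb z)
        · intro h; exact Or.inl h
      have hfacet : ∀ ρ ∈ K, b ⊆ ρ → ρ = b := by
        intro ρ hρ h
        by_cases he : ρ = b
        · exact he
        · have hss : b ⊂ ρ := Finset.ssubset_iff_subset_ne.mpr ⟨h, fun h' => he h'.symm⟩
          have hm := hclose ρ hρ b self_mem_unitOf hss
          rw [hunit] at hm
          simpa using hm
      set K' := K.erase b with hK'def
      have hmemK' : ∀ z, z ∈ K' ↔ z ∈ K ∧ z ≠ b := by
        intro z; simp only [hK'def, Finset.mem_erase]; tauto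
      have hbK' : b ∉ K' := fun h => ((hmemK' b).mp h).2 rfl
      have hcard' : K'.card ≤ n := by
        have h1 : K'.card = K.card - 1 := Finset.card_erase_of_mem hbK
        have h3 : 1 ≤ K.card := Finset.card_pos.mpr hKne
        omega
      have hK'c : IsSimpComplex K' := by
        constructor
        · intro τ hτ; exact hK.1 _ ((hmemK' τ).mp hτ).1
        · intro μ hμ ρ hρμ hρne
          obtain ⟨hμK, hμb⟩ := (hmemK' μ).mp hμ
          have hρK : ρ ∈ K := hK.2 _ hμK _ hρμ hρne
          refine (hmemK' ρ).mpr ⟨hρK, ?_⟩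
          rintro rfl
          exact hμb (hfacet μ hμK hρμ)
      have hV'c : IsVectorFieldOn K' F V := by
        constructor
        · intro p hp
          have h1 := hV.1 p hp
          have hp1 : p.1 ≠ b := by
            intro h
            exact hmb p.2 (by rw [← h, Prod.mk.eta]; exact hp)
          have hp2 : p.2 ≠ b := hbno2 p hp
          exact ⟨(hmemK' _).mpr ⟨h1.1, hp1⟩, (hmemK' _).mpr ⟨h1.2.1, hp2⟩, h1.2.2⟩
        · exact fun p hp q hq hpq => hV.2 p hp q hq hpq
      obtain ⟨k, W, ⟨hMS, hreg⟩, hiff⟩ := ih K' V hcard' hK'c hV'c hnc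
      have hWk : W k = K' := hMS.2.1
      have hKeq : K = insert b K' := by rw [hK'def, Finset.insert_erase hbK]
      have hfill : ElemFilling K K' := ⟨b, hbK', hKeq, fun ρ hρ h => hfacet ρ hρ h⟩
      have hnostep : ∀ σ τ : Simplex, σ ∉ W k → τ ∉ W k → K = W k ∪ {σ, τ} →
          IsFreePair K σ τ → False := by
        intro σ τ h1 h2 hEq hfp
        rw [hWk] at h1 h2 hEq
        have hσK : σ ∈ K := by rw [hEq]; simp
        have hτK : τ ∈ K := by rw [hEq]; simp
        have hσb : σ = b := by by_contra h; exact h1 ((hmemK' σ).mpr ⟨hσK, h⟩)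
        have hτb : τ = b := by by_contra h; exact h2 ((hmemK' τ).mpr ⟨hτK, h⟩)
        have hclt := Finset.card_lt_card hfp.2.2.1
        rw [hσb, hτb] at hclt
        omega
      refine ⟨k+1, fun i => if i ≤ k then W i else K,
        ⟨morse_succ hMS hK (Or.inr hfill), ?_⟩, ?_⟩
      · intro σ τ hrp
        rcases regular_succ.mp hrp with h | ⟨h1, h2, hEq, hfp⟩
        · exact hreg σ τ h
        · exact (hnostep σ τ h1 h2 hEq hfp).elim
      · intro σ τ
        rw [regular_succ]
        constructor
        · intro h; left; exact (hiff σ τ).mp h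
        · rintro (h | ⟨h1, h2, hEq, hfp⟩)
          · exact (hiff σ τ).mpr h
          · exact (hnostep σ τ h1 h2 hEq hfp).elim

end Aux

theorem gradient_iff_morse_sequence (K : Cplx) (F : Simplex → ℤ)
    (V : Finset (Simplex × Simplex))
    (hK : IsSimpComplex K) (hF : IsStackOn K F) (hV : IsVectorFieldOn K F V) :
    ¬ HasNontrivialClosedPath V ↔
      ∃ (k : ℕ) (W : ℕ → Cplx), FSeq F ∅ K k W ∧
        ∀ σ τ : Simplex, ((σ, τ) ∈ V ↔ RegularPair k W σ τ) := by
  constructor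
  · intro hnc
    exact build F K.card K V le_rfl hK hV hnc
  · rintro ⟨k, W, ⟨hMS, -⟩, hiff⟩
    exact vf_noPath_of_seq hK hV hMS hiff
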